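/- Let φ: ℝ^d → [0,∞] be measurable with φ ≥ a·𝟙_{S_a} where S_a = {x : φ(x) ≥ a} ∪ {0}, and let ζ be a finite configuration of ⌊k⌋ points such that every subset of ζ with pairwise differences outside S_a has at most X elements. Then the pair energy satisfies (1/2) Σ_{x≠y ∈ ζ} φ(x−y) ≥ (a/2) · ⌊k⌋(⌊k⌋ − X)/X. -/

import Mathlib

open Finset
open scoped Classical ENNReal

noncomputable section

lemma turan_count {V : Type*} (R : V → V → Prop)
    (hsymR : ∀ x y, R x y → R y x) (X : ℕ) :
    ∀ n (ζ : Finset V), ζ.card = n →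
      (∀ t ⊆ ζ, (∀ x ∈ t, ∀ y ∈ t, x ≠ y → ¬ R x y) → t.card ≤ X) →
      ζ.card * ζ.card ≤ X * ((ζ.offDiag.filter fun p => R p.1 p.2).card + ζ.card) := by
  intro n
  induction n using Nat.strong_induction_on with
  | _ n ih =>
    intro ζ hcard hind
    rcases ζ.eq_empty_or_nonempty with rfl | ⟨x0, hx0⟩
    · simp
    -- family of independent subsets
    set 𝒜 : Finset (Finset V) :=
      ζ.powerset.filter (fun t => ∀ x ∈ t, ∀ y ∈ t, x ≠ y → ¬ R x y) with h𝒜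
    have h𝒜ne : ({x0} : Finset V) ∈ 𝒜 := by
      simp only [h𝒜, mem_filter, mem_powerset]
      refine ⟨by simpa using hx0, ?_⟩
      intro x hx y hy hxy
      simp only [mem_singleton] at hx hy
      exact absurd (hx.trans hy.symm) hxy
    obtain ⟨I, hI𝒜, hImax⟩ := 𝒜.exists_max_image Finset.card ⟨_, h𝒜ne⟩
    simp only [h𝒜, mem_filter, mem_powerset] at hI𝒜
    obtain ⟨hIζ, hIind⟩ := hI𝒜
    have hm1 : 1 ≤ I.card := by
      have := hImax _ h𝒜ne
      simpa using this
    have hmX : I.card ≤ X := hind I hIζ hIind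
    have hmn : I.card ≤ ζ.card := Finset.card_le_card hIζ
    -- every vertex outside I has a neighbor in I
    have hnbr : ∀ v ∈ ζ \ I, ∃ w ∈ I, R v w := by
      intro v hv
      rw [Finset.mem_sdiff] at hv
      by_contra hno
      push_neg at hno
      have hins : insert v I ∈ 𝒜 := by
        simp only [h𝒜, mem_filter, mem_powerset]
        refine ⟨Finset.insert_subset hv.1 hIζ, ?_⟩
        intro x hx y hy hxy
        rcases Finset.mem_insert.mp hx with hxv | hxI
        · rcases Finset.mem_insert.mp hy with hyv | hyI
          · exact absurd (hxv.trans hyv.symm) hxy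
          · exact hxv ▸ hno y hyI
        · rcases Finset.mem_insert.mp hy with hyv | hyI
          · intro h; exact hno x hxI (hsymR _ _ (hyv ▸ h))
          · exact hIind x hxI y hyI hxy
      have := hImax _ hins
      rw [Finset.card_insert_of_notMem hv.2] at this
      omega
    -- choice function
    set f : V → V := fun v => if h : ∃ w ∈ I, R v w then h.choose else v with hf
    have hfI : ∀ v ∈ ζ \ I, f v ∈ I ∧ R v (f v) := by
      intro v hv
      have h := hnbr v hv
      simp only [hf, dif_pos h]
      exact ⟨h.choose_spec.1, h.choose_spec.2⟩
    set E := ζ.offDiag.filter (fun p => R p.1 p.2) with hE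
    set A := (ζ \ I).image (fun v => (v, f v)) with hA
    set B := (ζ \ I).image (fun v => (f v, v)) with hB
    set C := (ζ \ I).offDiag.filter (fun p => R p.1 p.2) with hC
    have hvne : ∀ v ∈ ζ \ I, v ≠ f v := by
      intro v hv h
      have := (hfI v hv).1
      rw [← h] at this
      exact (Finset.mem_sdiff.mp hv).2 this
    have hAE : A ⊆ E := by
      intro p hp
      simp only [hA, Finset.mem_image] at hp
      obtain ⟨v, hv, rfl⟩ := hp
      simp only [hE, Finset.mem_filter, Finset.mem_offDiag]
      exact ⟨⟨(Finset.mem_sdiff.mp hv).1, hIζ (hfI v hv).1, hvne v hv⟩, (hfI v hv).2⟩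
    have hBE : B ⊆ E := by
      intro p hp
      simp only [hB, Finset.mem_image] at hp
      obtain ⟨v, hv, rfl⟩ := hp
      simp only [hE, Finset.mem_filter, Finset.mem_offDiag]
      exact ⟨⟨hIζ (hfI v hv).1, (Finset.mem_sdiff.mp hv).1, (hvne v hv).symm⟩,
        hsymR _ _ (hfI v hv).2⟩
    have hCE : C ⊆ E := by
      intro p hp
      simp only [hC, hE, Finset.mem_filter, Finset.mem_offDiag, Finset.mem_sdiff] at hp ⊢
      tauto
    have hAcard : A.card = (ζ \ I).card := by
      rw [hA]
      apply Finset.card_image_of_injOn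
      intro x _ y _ h
      exact congrArg Prod.fst h
    have hBcard : B.card = (ζ \ I).card := by
      rw [hB]
      apply Finset.card_image_of_injOn
      intro x _ y _ h
      exact congrArg Prod.snd h
    have hAB : Disjoint A B := by
      rw [Finset.disjoint_left]
      intro p hpA hpB
      simp only [hA, hB, Finset.mem_image] at hpA hpB
      obtain ⟨v, hv, rfl⟩ := hpA
      obtain ⟨u, hu, h⟩ := hpB
      have : v = f u := (congrArg Prod.fst h).symm
      have hvI : v ∈ I := this ▸ (hfI u hu).1
      exact (Finset.mem_sdiff.mp hv).2 hvI
    have hAC : Disjoint A C := by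
      rw [Finset.disjoint_left]
      intro p hpA hpC
      simp only [hA, Finset.mem_image] at hpA
      obtain ⟨v, hv, rfl⟩ := hpA
      simp only [hC, Finset.mem_filter, Finset.mem_offDiag, Finset.mem_sdiff] at hpC
      exact hpC.1.2.1.2 (hfI v hv).1
    have hBC : Disjoint B C := by
      rw [Finset.disjoint_left]
      intro p hpB hpC
      simp only [hB, Finset.mem_image] at hpB
      obtain ⟨v, hv, rfl⟩ := hpB
      simp only [hC, Finset.mem_filter, Finset.mem_offDiag, Finset.mem_sdiff] at hpC
      exact hpC.1.1.2 (hfI v hv).1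
    have hunion : (A ∪ B ∪ C).card ≤ E.card :=
      Finset.card_le_card (by
        intro p hp
        rcases Finset.mem_union.mp hp with hp | hp
        · rcases Finset.mem_union.mp hp with hp | hp
          · exact hAE hp
          · exact hBE hp
        · exact hCE hp)
    have hcardunion : (A ∪ B ∪ C).card = A.card + B.card + C.card := by
      rw [Finset.card_union_of_disjoint, Finset.card_union_of_disjoint hAB]
      exact Finset.disjoint_union_left.mpr ⟨hAC, hBC⟩
    have hsdcard : (ζ \ I).card = ζ.card - I.card := Finset.card_sdiff_of_subset hIζ
    -- induction hypothesis on ζ \ I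
    have hih : (ζ \ I).card * (ζ \ I).card ≤ X * (C.card + (ζ \ I).card) := by
      apply ih (ζ \ I).card _ _ rfl
      · intro t ht hti
        exact hind t (ht.trans (Finset.sdiff_subset)) hti
      · rw [hsdcard, ← hcard]; omega
    have hEcount : C.card + 2 * (ζ \ I).card ≤ E.card := by
      rw [hcardunion] at hunion
      omega
    have hsplit : ζ.card = (ζ \ I).card + I.card := by omega
    nlinarith [hih, hEcount, hmX, hm1, hsplit]

/-- Pair-energy lower bound: let `φ : ℝ^d → [0,∞]` with `φ ≥ a` on
`S ∖ {0}` (where `S` plays the role of `S_a = {φ ≥ a} ∪ {0}`, a symmetric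
set), and let `ζ` be a configuration of `⌊k⌋` points such that every subset
of `ζ` with all pairwise differences outside `S` has at most `X` elements.
Then `(1/2) Σ_{x≠y∈ζ} φ(x−y) ≥ (a/2)·⌊k⌋(⌊k⌋−X)/X`. -/
theorem pair_energy_lower_bound {d : ℕ}
    (φ : EuclideanSpace ℝ (Fin d) → ℝ≥0∞) (hφm : Measurable φ)
    (a : ℝ) (ha : 0 < a)
    (S : Set (EuclideanSpace ℝ (Fin d)))
    (h0 : (0 : EuclideanSpace ℝ (Fin d)) ∈ S)
    (hsym : ∀ x : EuclideanSpace ℝ (Fin d), x ∈ S ↔ -x ∈ S)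
    (hφS : ∀ x ∈ S, x ≠ 0 → ENNReal.ofReal a ≤ φ x)
    (k : ℝ) (hk : 0 < k)
    (ζ : Finset (EuclideanSpace ℝ (Fin d))) (hζ : ζ.card = Nat.floor k)
    (X : ℕ) (hX : 1 ≤ X)
    (hind : ∀ t ⊆ ζ, (∀ x ∈ t, ∀ y ∈ t, x ≠ y → x - y ∉ S) → t.card ≤ X) :
    ENNReal.ofReal
        (a / 2 * ((Nat.floor k : ℝ) * ((Nat.floor k : ℝ) - (X : ℝ)) / X)) ≤
      (1 / 2 : ℝ≥0∞) * ∑ p ∈ ζ.offDiag, φ (p.1 - p.2) := by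
  classical
  set n : ℕ := Nat.floor k with hn
  set R : EuclideanSpace ℝ (Fin d) → EuclideanSpace ℝ (Fin d) → Prop :=
    fun x y => x - y ∈ S with hR
  have hsymR : ∀ x y, R x y → R y x := by
    intro x y h
    have := (hsym (x - y)).mp h
    simpa [neg_sub] using this
  set E := ζ.offDiag.filter (fun p => R p.1 p.2) with hE
  have hkey : ζ.card * ζ.card ≤ X * (E.card + ζ.card) :=
    turan_count R hsymR X ζ.card ζ rfl hind
  -- lower bound the sum
  have hsum : (E.card : ℝ≥0∞) * ENNReal.ofReal a ≤ ∑ p ∈ ζ.offDiag, φ (p.1 - p.2) := by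
    calc (E.card : ℝ≥0∞) * ENNReal.ofReal a
        = ∑ _p ∈ E, ENNReal.ofReal a := by
          rw [Finset.sum_const, nsmul_eq_mul]
      _ ≤ ∑ p ∈ E, φ (p.1 - p.2) := by
          apply Finset.sum_le_sum
          intro p hp
          simp only [hE, Finset.mem_filter, Finset.mem_offDiag] at hp
          exact hφS _ hp.2 (sub_ne_zero.mpr hp.1.2.2)
      _ ≤ ∑ p ∈ ζ.offDiag, φ (p.1 - p.2) :=
          Finset.sum_le_sum_of_subset (Finset.filter_subset _ _)
  -- real-side inequality
  have hXpos : (0 : ℝ) < X := by exact_mod_cast hX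
  have hreal : (n : ℝ) * ((n : ℝ) - X) / X ≤ E.card := by
    rw [div_le_iff₀ hXpos]
    have : (ζ.card : ℝ) * ζ.card ≤ X * (E.card + ζ.card) := by exact_mod_cast hkey
    rw [hζ] at this
    nlinarith [this]
  have hmain : a / 2 * ((n : ℝ) * ((n : ℝ) - X) / X) ≤ a / 2 * E.card :=
    mul_le_mul_of_nonneg_left hreal (by positivity)
  calc ENNReal.ofReal (a / 2 * ((n : ℝ) * ((n : ℝ) - X) / X))
      ≤ ENNReal.ofReal (a / 2 * E.card) := ENNReal.ofReal_le_ofReal hmain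
    _ = (1 / 2 : ℝ≥0∞) * ((E.card : ℝ≥0∞) * ENNReal.ofReal a) := by
        rw [show a / 2 * (E.card : ℝ) = (1 / 2) * ((E.card : ℝ) * a) by ring,
          ENNReal.ofReal_mul (by norm_num), ENNReal.ofReal_mul (p := (E.card : ℝ)) (Nat.cast_nonneg _)]
        norm_num [ENNReal.ofReal_natCast]
        rw [ENNReal.ofReal_div_of_pos (by norm_num), ENNReal.ofReal_one]
        norm_num
    _ ≤ (1 / 2 : ℝ≥0∞) * ∑ p ∈ ζ.offDiag, φ (p.1 - p.2) :=
        mul_le_mul_right hsum _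

end
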